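/- arXiv:2509.21508 — 5 statements merged into one kernel-verified Lean document; each statement's English description precedes it below -/
import Mathlib

section
/- Define g(y) = ln(2y) + ln(ln(2y)) and h(y) = ln(2y) + ln(2·ln(2y)). Then for all sufficiently large y > 0 one has cosh(g(y))/g(y) ≤ y ≤ cosh(h(y))/h(y). -/
/-- With `g(y) = ln(2y) + ln(ln(2y))` and `h(y) = ln(2y) + ln(2 ln(2y))`, for all
sufficiently large `y` one has `cosh(g y)/g y ≤ y ≤ cosh(h y)/h y`. -/
theorem stmt2 :
    ∃ y₀ : ℝ, ∀ y : ℝ, y₀ ≤ y →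
      Real.cosh (Real.log (2 * y) + Real.log (Real.log (2 * y))) /
          (Real.log (2 * y) + Real.log (Real.log (2 * y))) ≤ y ∧
      y ≤ Real.cosh (Real.log (2 * y) + Real.log (2 * Real.log (2 * y))) /
          (Real.log (2 * y) + Real.log (2 * Real.log (2 * y))) := by
  refine ⟨100, fun y hy => ?_⟩
  have hy0 : (0:ℝ) < y := by linarith
  have h2y : (0:ℝ) < 2 * y := by linarith
  set L := Real.log (2 * y) with hLdef
  have he1 : Real.exp 1 < 2.7182818286 := Real.exp_one_lt_d9
  have hL5 : (5:ℝ) ≤ L := by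
    rw [hLdef, Real.le_log_iff_exp_le h2y]
    have h5 : Real.exp 5 = Real.exp 1 ^ 5 := by
      rw [← Real.exp_nat_mul]; norm_num
    have hp : Real.exp 1 ^ 5 ≤ (2.7182818286:ℝ) ^ 5 :=
      pow_le_pow_left₀ (Real.exp_pos 1).le he1.le 5
    have : (2.7182818286:ℝ) ^ 5 < 200 := by norm_num
    nlinarith
  have hLpos : (0:ℝ) < L := by linarith
  have hlogL1 : (1:ℝ) ≤ Real.log L := by
    rw [Real.le_log_iff_exp_le hLpos]; linarith
  have hlogL : Real.log L ≤ L - 1 := Real.log_le_sub_one_of_pos hLpos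
  have hlog2 : Real.log 2 ≤ 1 := by
    have := Real.log_le_sub_one_of_pos (by norm_num : (0:ℝ) < 2); linarith
  have hlog2L : Real.log (2 * L) ≤ L := by
    rw [Real.log_mul (by norm_num) (ne_of_gt hLpos)]; linarith
  have hlog2Lpos : (0:ℝ) < Real.log (2 * L) := by
    rw [Real.log_mul (by norm_num) (ne_of_gt hLpos)]
    have := Real.log_nonneg (by norm_num : (1:ℝ) ≤ 2)
    linarith
  -- exp values
  have expg : Real.exp (L + Real.log L) = 2 * y * L := by
    rw [Real.exp_add, Real.exp_log h2y, Real.exp_log hLpos]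
  have exph : Real.exp (L + Real.log (2 * L)) = 2 * y * (2 * L) := by
    rw [Real.exp_add, Real.exp_log h2y, Real.exp_log (by linarith : (0:ℝ) < 2 * L)]
  have hgpos : (0:ℝ) < L + Real.log L := by linarith
  have hhpos : (0:ℝ) < L + Real.log (2 * L) := by linarith
  have hyL : (1:ℝ) ≤ 2 * y * L := by nlinarith
  constructor
  · rw [div_le_iff₀ hgpos, Real.cosh_eq, expg, Real.exp_neg, expg]
    have hinv : (2 * y * L)⁻¹ ≤ 1 := inv_le_one_of_one_le₀ hyL
    have hinv0 : (0:ℝ) ≤ (2 * y * L)⁻¹ := by positivity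
    nlinarith [mul_le_mul hy hlogL1 (by norm_num) hy0.le]
  · rw [le_div_iff₀ hhpos, Real.cosh_eq, exph, Real.exp_neg, exph]
    have hinv0 : (0:ℝ) ≤ (2 * y * (2 * L))⁻¹ := by positivity
    nlinarith [mul_le_mul_of_nonneg_left hlog2L hy0.le]
end

section
/- Let f(x) = cosh(x)/x with unique minimum at x_min, and let f⁻¹ denote the inverse of f restricted to (x_min, ∞). Then for all sufficiently large y, ln(2y) ≤ ln(2y) + ln(ln(2y)) ≤ f⁻¹(y) ≤ ln(2y) + ln(2·ln(2y)). -/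
/-- For `f(x) = cosh x / x` with unique minimum point `x_min`, and `f⁻¹` the inverse of
`f` on the increasing branch `(x_min, ∞)`: for all sufficiently large `y`, any solution
`x > x_min` of `cosh x / x = y` satisfies
`ln(2y) ≤ ln(2y) + ln(ln(2y)) ≤ x ≤ ln(2y) + ln(2 ln(2y))`. -/
theorem stmt3 (xmin : ℝ) (hx : 0 < xmin)
    (hchar : xmin * Real.sinh xmin = Real.cosh xmin) :
    ∃ y₀ : ℝ, ∀ y : ℝ, y₀ ≤ y → ∀ x : ℝ, xmin < x → Real.cosh x / x = y →
      Real.log (2 * y) ≤ Real.log (2 * y) + Real.log (Real.log (2 * y)) ∧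
      Real.log (2 * y) + Real.log (Real.log (2 * y)) ≤ x ∧
      x ≤ Real.log (2 * y) + Real.log (2 * Real.log (2 * y)) := by
  -- φ(x) = x sinh x - cosh x is strictly increasing on [0, ∞)
  have hφmono : StrictMonoOn (fun x : ℝ => x * Real.sinh x - Real.cosh x) (Set.Ici 0) := by
    apply strictMonoOn_of_deriv_pos (convex_Ici 0)
    · fun_prop
    · intro t ht
      rw [interior_Ici] at ht
      have hd : HasDerivAt (fun x : ℝ => x * Real.sinh x - Real.cosh x) (t * Real.cosh t) t := by
        have h1 : HasDerivAt (fun x : ℝ => x * Real.sinh x)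
            (1 * Real.sinh t + t * Real.cosh t) t :=
          (hasDerivAt_id t).mul (Real.hasDerivAt_sinh t)
        have h2 : HasDerivAt (fun x : ℝ => x * Real.sinh x - Real.cosh x)
            (1 * Real.sinh t + t * Real.cosh t - Real.sinh t) t := h1.sub (Real.hasDerivAt_cosh t)
        convert h2 using 1
        ring
      rw [hd.deriv]
      exact mul_pos ht (Real.cosh_pos t)
  have hnum : ∀ t : ℝ, xmin < t → Real.cosh t < t * Real.sinh t := by
    intro t ht
    have := hφmono (Set.mem_Ici.mpr hx.le) (Set.mem_Ici.mpr (hx.trans ht).le) ht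
    simp only at this
    linarith
  -- f is strictly increasing on [xmin, ∞)
  have hfmono : StrictMonoOn (fun x : ℝ => Real.cosh x / x) (Set.Ici xmin) := by
    apply strictMonoOn_of_deriv_pos (convex_Ici xmin)
    · exact Real.continuous_cosh.continuousOn.div continuousOn_id
        (fun t ht => (hx.trans_le ht).ne')
    · intro t ht
      rw [interior_Ici] at ht
      have ht0 : (0:ℝ) < t := hx.trans ht
      have hd : HasDerivAt (fun x : ℝ => Real.cosh x / x)
          ((Real.sinh t * t - Real.cosh t * 1) / t ^ 2) t :=
        (Real.hasDerivAt_cosh t).div (hasDerivAt_id t) ht0.ne'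
      rw [hd.deriv]
      have := hnum t ht
      have : 0 < Real.sinh t * t - Real.cosh t * 1 := by nlinarith
      positivity
  refine ⟨max (Real.exp (max xmin (Real.exp 1))) 1, ?_⟩
  intro y hy x hxx hfx
  have hy1 : (1:ℝ) ≤ y := le_trans (le_max_right _ _) hy
  have hy0 : (0:ℝ) < y := lt_of_lt_of_le one_pos hy1
  have h2y0 : (0:ℝ) < 2 * y := by linarith
  set L := Real.log (2 * y) with hLdef
  have hexpL : Real.exp L = 2 * y := Real.exp_log h2y0
  have hLge : max xmin (Real.exp 1) ≤ L := by
    rw [hLdef, Real.le_log_iff_exp_le h2y0]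
    have h1 : Real.exp (max xmin (Real.exp 1)) ≤ y := le_trans (le_max_left _ _) hy
    linarith
  have hLe : Real.exp 1 ≤ L := le_trans (le_max_right _ _) hLge
  have hLx : xmin ≤ L := le_trans (le_max_left _ _) hLge
  have hL1 : (1:ℝ) ≤ L := by
    have : (1:ℝ) ≤ Real.exp 1 := Real.one_le_exp (by norm_num)
    linarith
  have hL0 : (0:ℝ) < L := lt_of_lt_of_le one_pos hL1
  have hlnL : (1:ℝ) ≤ Real.log L := by
    rw [Real.le_log_iff_exp_le hL0]
    exact hLe
  have hlnL0 : (0:ℝ) ≤ Real.log L := by linarith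
  refine ⟨by linarith, ?_, ?_⟩
  · -- lower bound: g := L + log L ≤ x
    set g := L + Real.log L with hgdef
    have hg0 : 0 < g := by positivity
    have hgmem : g ∈ Set.Ici xmin := by
      simp only [Set.mem_Ici]; linarith
    have hxmem : x ∈ Set.Ici xmin := Set.mem_Ici.mpr hxx.le
    have hexpg : Real.exp g = 2 * y * L := by
      rw [hgdef, Real.exp_add, hexpL, Real.exp_log hL0]
    have hfg : Real.cosh g / g ≤ y := by
      rw [div_le_iff₀ hg0]
      have hcosh : Real.cosh g = (2 * y * L + (2 * y * L)⁻¹) / 2 := by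
        rw [Real.cosh_eq, hexpg, Real.exp_neg, hexpg]
      have hyL : (2:ℝ) ≤ 2 * y * L := by nlinarith
      have hinv : (2 * y * L)⁻¹ ≤ 1 := by
        rw [inv_le_one_iff₀]; right; linarith
      have hyg : y * g = y * L + y * Real.log L := by rw [hgdef]; ring
      have : (1:ℝ) ≤ y * Real.log L := by nlinarith
      rw [hcosh, hyg]
      nlinarith
    have : Real.cosh g / g ≤ Real.cosh x / x := by rw [hfx]; exact hfg
    exact (hfmono.le_iff_le hgmem hxmem).mp this
  · -- upper bound: x ≤ h := L + log (2L)
    set h := L + Real.log (2 * L) with hhdef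
    have hlog2L : Real.log (2 * L) = Real.log 2 + Real.log L := by
      rw [Real.log_mul (by norm_num) hL0.ne']
    have hlog2L1 : (1:ℝ) ≤ Real.log (2 * L) := by
      rw [hlog2L]
      have : (0:ℝ) ≤ Real.log 2 := Real.log_nonneg (by norm_num)
      linarith
    have hlog2L_leL : Real.log (2 * L) ≤ L := by
      rw [hlog2L]
      have h2 : Real.log 2 ≤ 1 := by
        have := Real.log_le_sub_one_of_pos (by norm_num : (0:ℝ) < 2)
        linarith
      have hL : Real.log L ≤ L - 1 := Real.log_le_sub_one_of_pos hL0
      linarith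
    have hh0 : 0 < h := by rw [hhdef]; linarith
    have hhmem : h ∈ Set.Ici xmin := by
      simp only [Set.mem_Ici, hhdef]; linarith
    have hxmem : x ∈ Set.Ici xmin := Set.mem_Ici.mpr hxx.le
    have hexph : Real.exp h = 2 * y * (2 * L) := by
      rw [hhdef, Real.exp_add, hexpL, Real.exp_log (by linarith : (0:ℝ) < 2 * L)]
    have hfh : y ≤ Real.cosh h / h := by
      rw [le_div_iff₀ hh0]
      have hcosh : 2 * y * L ≤ Real.cosh h := by
        have h1 : Real.exp h / 2 ≤ Real.cosh h := by
          rw [Real.cosh_eq]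
          have := Real.exp_pos (-h)
          linarith
        rw [hexph] at h1
        linarith
      have : y * h ≤ 2 * y * L := by
        rw [hhdef]
        nlinarith
      linarith
    have : Real.cosh x / x ≤ Real.cosh h / h := by rw [hfx]; exact hfh
    exact (hfmono.le_iff_le hxmem hhmem).mp this
end

section
/- Fix R ≥ 1/2 and H > 0 small, and suppose ρ > 0 satisfies ρ·arcosh(R/ρ) = H with H/ρ > x_min (the 'small' catenoid solution, where x_min minimizes cosh(x)/x). Then ρ ≤ H/ln(2R/H) and in particular ρ ≤ H, provided 2R/H ≥ e. -/
/-- The inverse of `cosh` on `[1, ∞)`. -/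
noncomputable def arcosh (x : ℝ) : ℝ := Real.log (x + Real.sqrt (x ^ 2 - 1))

lemma exp115_ge : (3:ℝ) ≤ Real.exp 1.15 := by
  have h1 : Real.exp 1 > 2.7182818283 := Real.exp_one_gt_d9
  have h2 : (0.15:ℝ) + 1 < Real.exp 0.15 := Real.add_one_lt_exp (by norm_num)
  have h3 : Real.exp 1.15 = Real.exp 1 * Real.exp 0.15 := by
    rw [← Real.exp_add]; norm_num
  nlinarith [Real.exp_pos (0.15:ℝ)]

lemma exp115_le : Real.exp 1.15 ≤ 3.2 := by
  have h1 : Real.exp 1 < 2.7182818286 := Real.exp_one_lt_d9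
  have h2 : (-0.15:ℝ) + 1 < Real.exp (-0.15) := Real.add_one_lt_exp (by norm_num)
  have h3 : Real.exp 1.15 = Real.exp 1 * Real.exp 0.15 := by
    rw [← Real.exp_add]; norm_num
  have h4 : Real.exp 0.15 * Real.exp (-0.15) = 1 := by
    rw [← Real.exp_add]; norm_num
  have h5 : Real.exp 0.15 < 1 / 0.85 := by
    rw [lt_div_iff₀ (by norm_num)]
    nlinarith [Real.exp_pos (0.15:ℝ)]
  nlinarith [Real.exp_pos (1:ℝ), Real.exp_pos (0.15:ℝ)]

lemma num2 : (1.15:ℝ) * Real.sinh 1.15 < Real.cosh 1.15 := by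
  rw [Real.sinh_eq, Real.cosh_eq]
  have h1 : Real.exp 1.15 ≤ 3.2 := exp115_le
  have h2 : (0:ℝ) < Real.exp 1.15 := Real.exp_pos _
  have h3 : Real.exp 1.15 * Real.exp (-1.15) = 1 := by
    rw [← Real.exp_add]; norm_num
  have h4 : (0:ℝ) < Real.exp (-1.15) := Real.exp_pos _
  nlinarith

/-- Let `R ≥ 1/2`, `H > 0`, and suppose `ρ > 0` satisfies `ρ * arcosh (R/ρ) = H` with
`H/ρ > x_min` (the 'small' catenoid solution, `x_min` minimizing `cosh x / x`). Then
`ρ ≤ H / ln(2R/H)`, and in particular `ρ ≤ H`, provided `2R/H ≥ e`. -/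
theorem stmt4 (xmin R H ρ : ℝ) (hx : 0 < xmin)
    (hchar : xmin * Real.sinh xmin = Real.cosh xmin)
    (hmin : ∀ x : ℝ, 0 < x → Real.cosh xmin / xmin ≤ Real.cosh x / x)
    (hR : 1 / 2 ≤ R) (hH : 0 < H) (hρ : 0 < ρ)
    (heq : ρ * arcosh (R / ρ) = H) (hsmall : xmin < H / ρ)
    (he : Real.exp 1 ≤ 2 * R / H) :
    ρ ≤ H / Real.log (2 * R / H) ∧ ρ ≤ H := by
  -- step 1 : xmin ≥ 1.15
  have hxmin15 : (1.15:ℝ) ≤ xmin := by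
    by_contra h
    push_neg at h
    have hs : 0 < Real.sinh (1.15 - xmin) := Real.sinh_pos_iff.2 (by linarith)
    rw [Real.sinh_sub] at hs
    have hsx : 0 < Real.sinh xmin := Real.sinh_pos_iff.2 hx
    have hs115 : 0 < Real.sinh (1.15:ℝ) := Real.sinh_pos_iff.2 (by norm_num)
    rw [← hchar] at hs
    nlinarith [num2, mul_pos hs115 hsx, mul_lt_mul_of_pos_right h (mul_pos hs115 hsx), mul_lt_mul_of_pos_right num2 hsx]
  set x := H / ρ with hxdef
  have hx0 : (0:ℝ) < x := by positivity
  have hx15 : (1.15:ℝ) < x := lt_of_le_of_lt hxmin15 hsmall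
  have hρne : ρ ≠ 0 := ne_of_gt hρ
  have harc : arcosh (R / ρ) = x := by
    rw [hxdef, eq_div_iff hρne]
    linear_combination heq
  have hRpos : (0:ℝ) < R := by linarith
  have hy0 : (0:ℝ) < R / ρ := by positivity
  -- R/ρ > 1
  have hy1 : 1 < R / ρ := by
    by_contra h
    push_neg at h
    have hsq : Real.sqrt ((R / ρ) ^ 2 - 1) = 0 := by
      apply Real.sqrt_eq_zero'.2
      nlinarith
    have : arcosh (R / ρ) ≤ 0 := by
      unfold arcosh
      rw [hsq, add_zero]
      exact Real.log_nonpos (le_of_lt hy0) h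
    linarith [harc, hx0]
  -- cosh x = R / ρ
  have hcosh : Real.cosh x = R / ρ := by
    rw [← harc]
    unfold arcosh
    set y := R / ρ with hy
    have hsq : Real.sqrt (y ^ 2 - 1) ^ 2 = y ^ 2 - 1 :=
      Real.sq_sqrt (by nlinarith)
    have hz : (0:ℝ) < y + Real.sqrt (y ^ 2 - 1) := by
      have := Real.sqrt_nonneg (y ^ 2 - 1); linarith
    rw [Real.cosh_eq, Real.exp_log hz, Real.exp_neg, Real.exp_log hz]
    field_simp
    nlinarith [Real.sqrt_nonneg (y ^ 2 - 1)]
  have hH' : H = ρ * x := by rw [hxdef]; field_simp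
  have h2RH : 2 * R / H = 2 * Real.cosh x / x := by
    have hr : R = ρ * Real.cosh x := by
      field_simp at hcosh; linarith
    rw [hr, hH']
    field_simp
  -- key inequality : 2 cosh x ≤ x * exp x
  have hkey : 2 * Real.cosh x ≤ Real.exp x * x := by
    rw [Real.cosh_eq]
    have e2 : (3:ℝ) ≤ Real.exp x := le_trans exp115_ge (Real.exp_le_exp.2 (le_of_lt hx15))
    have e1 : Real.exp (-x) ≤ 1/3 := by
      have : Real.exp (-x) ≤ Real.exp (-1.15) := Real.exp_le_exp.2 (by linarith)
      have h3 : Real.exp (-1.15) ≤ 1/3 := by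
        have h4 : Real.exp 1.15 * Real.exp (-1.15) = 1 := by
          rw [← Real.exp_add]; norm_num
        nlinarith [exp115_ge, Real.exp_pos (-1.15:ℝ)]
      linarith
    nlinarith
  have hpos2RH : (0:ℝ) < 2 * R / H := by positivity
  have hlog : Real.log (2 * R / H) ≤ x := by
    rw [Real.log_le_iff_le_exp hpos2RH, h2RH, div_le_iff₀ hx0]
    linarith
  have hlog1 : 1 ≤ Real.log (2 * R / H) := by
    have := Real.log_le_log (Real.exp_pos 1) he
    rwa [Real.log_exp] at this
  have hρeq : ρ = H / x := by rw [eq_div_iff hx0.ne']; exact hH'.symm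
  constructor
  · rw [hρeq]
    apply div_le_div_of_nonneg_left (le_of_lt hH) (by linarith) hlog
  · rw [hρeq]
    rw [div_le_iff₀ hx0]
    have h15 : H * 1.15 < H * x := mul_lt_mul_of_pos_left hx15 hH
    linarith
end

section
/- Fix m ≥ 3 and let c(r) = ∫₁^r (s^{2(m−1)} − 1)^{−1/2} ds with c_∞ = lim_{r→∞} c(r) < ∞. For R > 0 define h(ρ) = ρ·c(R/ρ) for 0 < ρ < R. Then h'(ρ) = c(R/ρ) − (R/ρ)·(( R/ρ)^{2(m−1)} − 1)^{−1/2}, h' has exactly one zero ρ₀ ∈ (0, R), and h attains a unique maximum H_∞ = h(ρ₀) on (0,R). -/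
/-- The higher-dimensional catenoid profile `c(r) = ∫₁^r (s^(2(m−1)) − 1)^(−1/2) ds`. -/
noncomputable def cprof (m : ℕ) (r : ℝ) : ℝ :=
  ∫ s in Set.Ioo 1 r, (Real.sqrt (s ^ (2 * (m - 1)) - 1))⁻¹

open Set MeasureTheory intervalIntegral


noncomputable def fint (n : ℕ) (s : ℝ) : ℝ := (Real.sqrt (s ^ n - 1))⁻¹

lemma fint_meas (n : ℕ) : Measurable (fint n) := by
  have : Continuous fun s : ℝ => Real.sqrt (s ^ n - 1) :=
    Real.continuous_sqrt.comp ((continuous_pow n).sub continuous_const)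
  exact this.measurable.inv

lemma my_one_lt_pow {s : ℝ} {n : ℕ} (hn : 1 ≤ n) (hs : 1 < s) : 1 < s ^ n :=
  one_lt_pow₀ hs (by omega)

lemma fint_pos {n : ℕ} (hn : 1 ≤ n) {s : ℝ} (hs : 1 < s) : 0 < fint n s := by
  have h : 0 < s ^ n - 1 := by have := my_one_lt_pow hn hs; linarith
  exact inv_pos.2 (Real.sqrt_pos.2 h)

lemma fint_nonneg (n : ℕ) (s : ℝ) : 0 ≤ fint n s :=
  inv_nonneg.2 (Real.sqrt_nonneg _)

lemma fint_contAt {n : ℕ} (hn : 1 ≤ n) {s : ℝ} (hs : 1 < s) :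
    ContinuousAt (fint n) s := by
  have h : 0 < s ^ n - 1 := by have := my_one_lt_pow hn hs; linarith
  have hc : ContinuousAt (fun s : ℝ => Real.sqrt (s ^ n - 1)) s :=
    (Real.continuous_sqrt.comp ((continuous_pow n).sub continuous_const)).continuousAt
  exact hc.inv₀ (ne_of_gt (Real.sqrt_pos.2 h))

lemma fint_integrableOn {n : ℕ} (hn : 1 ≤ n) (t : ℝ) :
    IntegrableOn (fint n) (Ioc 1 t) := by
  rcases le_or_gt t 1 with ht | ht
  · rw [Set.Ioc_eq_empty (by exact not_lt.2 ht)]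
    exact integrableOn_empty
  -- dominating function: (s-1)^(-1/2)
  have hg0 : IntervalIntegrable (fun x : ℝ => x ^ (-(1/2) : ℝ)) volume 0 (t - 1) :=
    intervalIntegrable_rpow' (by norm_num)
  have hg1 : IntervalIntegrable (fun x : ℝ => (x - 1) ^ (-(1/2) : ℝ)) volume 1 t := by
    have := hg0.comp_sub_right 1
    simpa using this
  have hg : IntegrableOn (fun x : ℝ => (x - 1) ^ (-(1/2) : ℝ)) (Ioc 1 t) :=
    (intervalIntegrable_iff_integrableOn_Ioc_of_le ht.le).1 hg1
  refine hg.mono' ((fint_meas n).aestronglyMeasurable) ?_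
  filter_upwards [ae_restrict_mem measurableSet_Ioc] with s hs
  have hs1 : (1:ℝ) < s := hs.1
  have hsub : 0 < s - 1 := by linarith
  have hpow : s - 1 ≤ s ^ n - 1 := by
    have : s ≤ s ^ n := le_self_pow₀ hs1.le (by omega)
    linarith
  have h1 : Real.sqrt (s - 1) ≤ Real.sqrt (s ^ n - 1) := Real.sqrt_le_sqrt hpow
  have h2 : 0 < Real.sqrt (s - 1) := Real.sqrt_pos.2 hsub
  have : fint n s ≤ (Real.sqrt (s - 1))⁻¹ := by
    exact inv_anti₀ h2 h1
  rw [Real.norm_eq_abs, abs_of_nonneg (fint_nonneg n s)]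
  calc fint n s ≤ (Real.sqrt (s - 1))⁻¹ := this
    _ = (s - 1) ^ (-(1/2) : ℝ) := by
        rw [Real.sqrt_eq_rpow, ← Real.rpow_neg hsub.le]


lemma cprof_eq_intervalIntegral (m : ℕ) {r : ℝ} (hr : 1 ≤ r) :
    cprof m r = ∫ s in (1:ℝ)..r, fint (2 * (m - 1)) s := by
  rw [intervalIntegral.integral_of_le hr, integral_Ioc_eq_integral_Ioo]
  rfl

lemma hasDerivAt_cprof {m : ℕ} (hm : 3 ≤ m) {t : ℝ} (ht : 1 < t) :
    HasDerivAt (cprof m) (fint (2 * (m - 1)) t) t := by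
  set n := 2 * (m - 1) with hn
  have hn1 : 1 ≤ n := by omega
  have hC : HasDerivAt (fun r => ∫ s in (1:ℝ)..r, fint n s) (fint n t) t := by
    refine intervalIntegral.integral_hasDerivAt_right ?_ ?_ (fint_contAt hn1 ht)
    · exact (intervalIntegrable_iff_integrableOn_Ioc_of_le ht.le).2 (fint_integrableOn hn1 t)
    · exact (fint_meas n).stronglyMeasurable.stronglyMeasurableAtFilter
  refine hC.congr_of_eventuallyEq ?_
  filter_upwards [Ioi_mem_nhds ht] with r hr
  exact cprof_eq_intervalIntegral m (le_of_lt hr)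

lemma cprof_mono {m : ℕ} (hm : 3 ≤ m) {a b : ℝ} (ha : 1 ≤ a) (hab : a ≤ b) :
    cprof m a ≤ cprof m b := by
  have hn1 : 1 ≤ 2 * (m - 1) := by omega
  have hint : IntegrableOn (fint (2 * (m-1))) (Ioo 1 b) :=
    (fint_integrableOn hn1 b).mono_set Set.Ioo_subset_Ioc_self
  have : cprof m a ≤ cprof m b := by
    refine setIntegral_mono_set hint ?_ ?_
    · exact Filter.Eventually.of_forall (fun s => fint_nonneg _ s)
    · exact HasSubset.Subset.eventuallyLE (Set.Ioo_subset_Ioo le_rfl hab)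
  exact this

lemma cprof_two_pos {m : ℕ} (hm : 3 ≤ m) : 0 < cprof m 2 := by
  have hn1 : 1 ≤ 2 * (m - 1) := by omega
  have hint : IntegrableOn (fint (2 * (m-1))) (Ioo 1 2) :=
    (fint_integrableOn hn1 2).mono_set Set.Ioo_subset_Ioc_self
  have h : 0 < ∫ s in Set.Ioo (1:ℝ) 2, fint (2*(m-1)) s := by
    rw [setIntegral_pos_iff_support_of_nonneg_ae
      (Filter.Eventually.of_forall (fun s => fint_nonneg _ s)) hint]
    have hsub : Set.Ioo (1:ℝ) 2 ⊆ Function.support (fint (2*(m-1))) ∩ Set.Ioo 1 2 := by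
      intro s hs
      exact ⟨ne_of_gt (fint_pos hn1 hs.1), hs⟩
    calc (0:ENNReal) < volume (Set.Ioo (1:ℝ) 2) := by simp
      _ ≤ volume (Function.support (fint (2*(m-1))) ∩ Set.Ioo 1 2) := measure_mono hsub
  exact h

noncomputable def Gfun (m : ℕ) (t : ℝ) : ℝ := cprof m t - t * fint (2 * (m - 1)) t

lemma hasDerivAt_Gfun {m : ℕ} (hm : 3 ≤ m) {t : ℝ} (ht : 1 < t) :
    ∃ d, HasDerivAt (Gfun m) d t ∧ 0 < d := by
  set n := 2 * (m - 1) with hn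
  have hn1 : 1 ≤ n := by omega
  have hu : 0 < t ^ n - 1 := by
    have := my_one_lt_pow hn1 ht; linarith
  have hsq : 0 < Real.sqrt (t ^ n - 1) := Real.sqrt_pos.2 hu
  have hup : HasDerivAt (fun t : ℝ => t ^ n - 1) ((n:ℝ) * t ^ (n-1)) t :=
    (hasDerivAt_pow n t).sub_const 1
  have hs : HasDerivAt (fun t : ℝ => Real.sqrt (t ^ n - 1))
      (1 / (2 * Real.sqrt (t ^ n - 1)) * ((n:ℝ) * t ^ (n-1))) t :=
    (Real.hasDerivAt_sqrt (ne_of_gt hu)).comp t hup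
  have hinv : HasDerivAt (fun t : ℝ => (Real.sqrt (t ^ n - 1))⁻¹)
      (-(1 / (2 * Real.sqrt (t ^ n - 1)) * ((n:ℝ) * t ^ (n-1))) / (Real.sqrt (t ^ n - 1)) ^ 2) t :=
    hs.inv (ne_of_gt hsq)
  have hmul : HasDerivAt (fun t : ℝ => t * (Real.sqrt (t ^ n - 1))⁻¹)
      (1 * (Real.sqrt (t ^ n - 1))⁻¹ +
        t * (-(1 / (2 * Real.sqrt (t ^ n - 1)) * ((n:ℝ) * t ^ (n-1))) / (Real.sqrt (t ^ n - 1)) ^ 2)) t :=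
    (hasDerivAt_id t).mul hinv
  have hG : HasDerivAt (Gfun m)
      (fint n t - (1 * (Real.sqrt (t ^ n - 1))⁻¹ +
        t * (-(1 / (2 * Real.sqrt (t ^ n - 1)) * ((n:ℝ) * t ^ (n-1))) / (Real.sqrt (t ^ n - 1)) ^ 2))) t :=
    (hasDerivAt_cprof hm ht).sub hmul
  refine ⟨_, hG, ?_⟩
  have hfr : fint n t = (Real.sqrt (t ^ n - 1))⁻¹ := rfl
  rw [hfr]
  have key : (Real.sqrt (t ^ n - 1))⁻¹ - (1 * (Real.sqrt (t ^ n - 1))⁻¹ +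
        t * (-(1 / (2 * Real.sqrt (t ^ n - 1)) * ((n:ℝ) * t ^ (n-1))) / (Real.sqrt (t ^ n - 1)) ^ 2))
      = t * ((1 / (2 * Real.sqrt (t ^ n - 1)) * ((n:ℝ) * t ^ (n-1))) / (Real.sqrt (t ^ n - 1)) ^ 2) := by
    ring
  rw [key]
  have htpos : 0 < t := lt_trans one_pos ht
  have hnp : (0:ℝ) < (n:ℝ) := by exact_mod_cast (by omega : 0 < n)
  have htp : 0 < t ^ (n-1) := pow_pos htpos _
  positivity

lemma Gfun_strictMono {m : ℕ} (hm : 3 ≤ m) : StrictMonoOn (Gfun m) (Set.Ioi 1) := by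
  refine strictMonoOn_of_deriv_pos (convex_Ioi 1) ?_ ?_
  · intro t ht
    obtain ⟨d, hd, _⟩ := hasDerivAt_Gfun hm ht
    exact hd.continuousAt.continuousWithinAt
  · intro t ht
    rw [interior_Ioi] at ht
    obtain ⟨d, hd, hdpos⟩ := hasDerivAt_Gfun hm ht
    rwa [hd.deriv]

lemma Gfun_zero_exists {m : ℕ} (hm : 3 ≤ m) :
    ∃ t₀ ∈ Set.Ioi (1:ℝ), Gfun m t₀ = 0 := by
  set n := 2 * (m - 1) with hn
  have hn1 : 1 ≤ n := by omega
  set A := cprof m 2 with hA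
  have hApos : 0 < A := cprof_two_pos hm
  -- point a near 1 with G a < 0
  obtain ⟨a, ha1, ha2, haG⟩ : ∃ a, 1 < a ∧ a < 2 ∧ Gfun m a < 0 := by
    have hev : ∀ᶠ t in nhdsWithin 1 (Set.Ioi 1),
        1 < t ∧ t < 2 ∧ t ^ n - 1 < A⁻¹ ^ 2 := by
      have h1 : ∀ᶠ t in nhdsWithin 1 (Set.Ioi (1:ℝ)), 1 < t :=
        eventually_mem_nhdsWithin
      have h2 : ∀ᶠ t in nhdsWithin 1 (Set.Ioi (1:ℝ)), t < 2 := by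
        apply eventually_nhdsWithin_of_eventually_nhds
        have : Set.Iio (2:ℝ) ∈ nhds (1:ℝ) := Iio_mem_nhds (by norm_num)
        filter_upwards [this] with t ht using ht
      have h3 : ∀ᶠ t in nhdsWithin 1 (Set.Ioi (1:ℝ)), t ^ n - 1 < A⁻¹ ^ 2 := by
        apply eventually_nhdsWithin_of_eventually_nhds
        have hc : ContinuousAt (fun t : ℝ => t ^ n - 1) 1 := by fun_prop
        have : (fun t : ℝ => t ^ n - 1) 1 < A⁻¹ ^ 2 := by
          simp; positivity
        exact hc.eventually_lt_const this
      filter_upwards [h1, h2, h3] with t ht1 ht2 ht3 using ⟨ht1, ht2, ht3⟩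
    obtain ⟨a, ha1, ha2, ha3⟩ := hev.exists
    refine ⟨a, ha1, ha2, ?_⟩
    have hca : cprof m a ≤ A := cprof_mono hm ha1.le ha2.le
    have hu : 0 < a ^ n - 1 := by have := my_one_lt_pow hn1 ha1; linarith
    have hsq : Real.sqrt (a ^ n - 1) < A⁻¹ := by
      have : Real.sqrt (a ^ n - 1) < Real.sqrt (A⁻¹ ^ 2) :=
        Real.sqrt_lt_sqrt hu.le ha3
      rwa [Real.sqrt_sq (by positivity)] at this
    have hfa : A < fint n a := by
      have h0 : 0 < Real.sqrt (a ^ n - 1) := Real.sqrt_pos.2 hu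
      have := (inv_lt_inv₀ (by positivity) h0).2 hsq
      rwa [inv_inv] at this
    have : A < a * fint n a := by
      have h1 : fint n a ≤ a * fint n a := by
        nlinarith [fint_nonneg n a, fint_pos hn1 ha1]
      linarith
    have : cprof m a - a * fint n a < 0 := by linarith
    exact this
  -- point b large with G b > 0
  obtain ⟨b, hb2, hbG⟩ : ∃ b, 2 ≤ b ∧ 0 < Gfun m b := by
    set b := max 2 (2 / A) with hb
    refine ⟨b, le_max_left _ _, ?_⟩
    have hb2 : (2:ℝ) ≤ b := le_max_left _ _
    have hbpos : (0:ℝ) < b := by linarith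
    have hbA : 2 / A ≤ b := le_max_right _ _
    have hcb : A ≤ cprof m b := cprof_mono hm (by norm_num) hb2
    -- b * fint n b ≤ sqrt 2 / b < A
    have hbn : b ^ n - 1 ≥ b ^ n / 2 := by
      have h1 : (2:ℝ) ≤ b ^ n := by
        calc (2:ℝ) ≤ 2 ^ n := by
              have : (2:ℝ)^1 ≤ 2^n := pow_le_pow_right₀ (by norm_num) (by omega)
              simpa using this
          _ ≤ b ^ n := pow_le_pow_left₀ (by norm_num) hb2 n
      linarith
    have hfb : b * fint n b < A := by
      have hsq : Real.sqrt (b ^ 4 / 2) ≤ Real.sqrt (b ^ n - 1) := by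
        apply Real.sqrt_le_sqrt
        have : b ^ 4 ≤ b ^ n := pow_le_pow_right₀ (by linarith) (by omega)
        linarith
      have h4 : Real.sqrt (b ^ 4 / 2) = b ^ 2 / Real.sqrt 2 := by
        rw [Real.sqrt_div (by positivity) 2]
        congr 1
        rw [show b ^ 4 = (b ^ 2) ^ 2 by ring, Real.sqrt_sq (by positivity)]
      have hfle : fint n b ≤ Real.sqrt 2 / b ^ 2 := by
        have hpos : 0 < b ^ 2 / Real.sqrt 2 := by positivity
        have := inv_anti₀ hpos (h4 ▸ hsq)
        rwa [inv_div] at this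
      have hs2 : Real.sqrt 2 < 2 := by
        nlinarith [Real.sq_sqrt (show (0:ℝ) ≤ 2 by norm_num), Real.sqrt_nonneg 2]
      have h2b : 2 / b ≤ A := by
        rw [div_le_iff₀ hbpos]
        have h6 := mul_le_mul_of_nonneg_left hbA hApos.le
        have h7 : A * (2 / A) = 2 := by field_simp
        linarith [h7 ▸ h6]
      have hc1 : b * fint n b ≤ Real.sqrt 2 / b := by
        have := mul_le_mul_of_nonneg_left hfle hbpos.le
        have heq : b * (Real.sqrt 2 / b ^ 2) = Real.sqrt 2 / b := by
          field_simp
        linarith [heq ▸ this]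
      have h5 : Real.sqrt 2 / b < 2 / b := by gcongr
      linarith
    have : 0 < cprof m b - b * fint n b := by linarith
    exact this
  -- IVT
  have hab : a < b := lt_of_lt_of_le ha2 hb2
  have hcont : ContinuousOn (Gfun m) (Set.Icc a b) := by
    intro t ht
    have h1t : 1 < t := lt_of_lt_of_le ha1 ht.1
    obtain ⟨d, hd, _⟩ := hasDerivAt_Gfun hm h1t
    exact hd.continuousAt.continuousWithinAt
  have := intermediate_value_Ioo hab.le hcont
  have h0 : (0:ℝ) ∈ Set.Ioo (Gfun m a) (Gfun m b) := ⟨haG, hbG⟩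
  obtain ⟨t₀, ht₀, hGt₀⟩ := this h0
  exact ⟨t₀, lt_trans ha1 ht₀.1, hGt₀⟩

/-- For `m ≥ 3` and `R > 0`, the function `h(ρ) = ρ · c(R/ρ)` on `(0, R)` has derivative
`h'(ρ) = c(R/ρ) − (R/ρ) (( R/ρ)^(2(m−1)) − 1)^(−1/2)`, `h'` has exactly one zero
`ρ₀ ∈ (0, R)`, and `h` attains a unique maximum at `ρ₀`. -/
theorem stmt7 (m : ℕ) (hm : 3 ≤ m) (R : ℝ) (hR : 0 < R) :
    (∀ ρ ∈ Set.Ioo (0 : ℝ) R,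
      HasDerivAt (fun σ : ℝ => σ * cprof m (R / σ))
        (cprof m (R / ρ) - (R / ρ) * (Real.sqrt ((R / ρ) ^ (2 * (m - 1)) - 1))⁻¹) ρ) ∧
    (∃! ρ₀ : ℝ, ρ₀ ∈ Set.Ioo (0 : ℝ) R ∧
      cprof m (R / ρ₀) - (R / ρ₀) * (Real.sqrt ((R / ρ₀) ^ (2 * (m - 1)) - 1))⁻¹ = 0) ∧
    ∃ ρ₀ ∈ Set.Ioo (0 : ℝ) R,
      (cprof m (R / ρ₀) - (R / ρ₀) * (Real.sqrt ((R / ρ₀) ^ (2 * (m - 1)) - 1))⁻¹ = 0) ∧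
      ∀ ρ ∈ Set.Ioo (0 : ℝ) R, ρ ≠ ρ₀ → ρ * cprof m (R / ρ) < ρ₀ * cprof m (R / ρ₀) := by
  have hn1 : 1 ≤ 2 * (m - 1) := by omega
  -- Part 1: the derivative
  have hderiv : ∀ ρ ∈ Set.Ioo (0 : ℝ) R,
      HasDerivAt (fun σ : ℝ => σ * cprof m (R / σ)) (Gfun m (R / ρ)) ρ := by
    intro ρ hρ
    have hρ0 : 0 < ρ := hρ.1
    have ht : 1 < R / ρ := (one_lt_div hρ0).2 hρ.2
    have h1 : HasDerivAt (fun σ : ℝ => R / σ) (R * (-(ρ ^ 2)⁻¹)) ρ := by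
      have := (hasDerivAt_inv (ne_of_gt hρ0)).const_mul R
      simpa [div_eq_mul_inv] using this
    have h2 : HasDerivAt (fun σ : ℝ => cprof m (R / σ))
        (fint (2 * (m - 1)) (R / ρ) * (R * (-(ρ ^ 2)⁻¹))) ρ :=
      (hasDerivAt_cprof hm ht).comp ρ h1
    have h3 := (hasDerivAt_id ρ).mul h2
    have heq : Gfun m (R / ρ) =
        1 * cprof m (R / ρ) +
          id ρ * (fint (2 * (m - 1)) (R / ρ) * (R * (-(ρ ^ 2)⁻¹))) := by
      show cprof m (R / ρ) - (R / ρ) * fint (2 * (m - 1)) (R / ρ) = _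
      have hρne : ρ ≠ 0 := ne_of_gt hρ0
      field_simp
      simp only [id_eq]
      ring
    rw [heq]
    exact h3
  -- the zero of G
  obtain ⟨t₀, ht₀, hGt₀⟩ := Gfun_zero_exists hm
  have ht₀1 : 1 < t₀ := ht₀
  set ρ₀ := R / t₀ with hρ₀def
  have hρ₀ : ρ₀ ∈ Set.Ioo (0 : ℝ) R :=
    ⟨div_pos hR (by linarith), div_lt_self hR ht₀1⟩
  have hRρ₀ : R / ρ₀ = t₀ := by
    rw [hρ₀def, div_div_eq_mul_div, mul_comm, mul_div_assoc, div_self (ne_of_gt hR), mul_one]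
  have hGρ₀ : Gfun m (R / ρ₀) = 0 := by rw [hRρ₀]; exact hGt₀
  have hsm := Gfun_strictMono hm
  -- sign of G(R/ρ)
  have hsignpos : ∀ ρ ∈ Set.Ioo (0 : ℝ) ρ₀, 0 < Gfun m (R / ρ) := by
    intro ρ hρm
    have hρpos : 0 < ρ := hρm.1
    have h1 : t₀ < R / ρ := by
      rw [lt_div_iff₀ hρpos]
      have h2 : ρ < R / t₀ := hρm.2
      have h3 : t₀ * ρ < t₀ * (R / t₀) :=
        mul_lt_mul_of_pos_left h2 (by linarith)
      have h4 : t₀ * (R / t₀) = R := by field_simp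
      linarith
    have := hsm ht₀ (Set.mem_Ioi.2 (lt_trans ht₀1 h1)) h1
    linarith [hGt₀ ▸ this]
  have hsignneg : ∀ ρ ∈ Set.Ioo ρ₀ R, Gfun m (R / ρ) < 0 := by
    intro ρ hρm
    have hρpos : 0 < ρ := lt_trans hρ₀.1 hρm.1
    have hρR : ρ < R := hρm.2
    have ht : 1 < R / ρ := (one_lt_div hρpos).2 hρR
    have h1 : R / ρ < t₀ := by
      rw [div_lt_iff₀ hρpos]
      have h2 : R / t₀ < ρ := hρm.1
      have h3 : t₀ * (R / t₀) < t₀ * ρ :=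
        mul_lt_mul_of_pos_left h2 (by linarith)
      have h4 : t₀ * (R / t₀) = R := by field_simp
      linarith
    have := hsm (Set.mem_Ioi.2 ht) ht₀ h1
    linarith [hGt₀ ▸ this]
  -- monotonicity of h
  have hmono : StrictMonoOn (fun σ : ℝ => σ * cprof m (R / σ)) (Set.Ioc 0 ρ₀) := by
    refine strictMonoOn_of_deriv_pos (convex_Ioc 0 ρ₀) ?_ ?_
    · intro ρ hρm
      have hmem : ρ ∈ Set.Ioo (0 : ℝ) R := ⟨hρm.1, lt_of_le_of_lt hρm.2 hρ₀.2⟩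
      exact (hderiv ρ hmem).continuousAt.continuousWithinAt
    · intro ρ hρm
      rw [interior_Ioc] at hρm
      have hmem : ρ ∈ Set.Ioo (0 : ℝ) R := ⟨hρm.1, lt_trans hρm.2 hρ₀.2⟩
      rw [(hderiv ρ hmem).deriv]
      exact hsignpos ρ hρm
  have hanti : StrictAntiOn (fun σ : ℝ => σ * cprof m (R / σ)) (Set.Ico ρ₀ R) := by
    refine strictAntiOn_of_deriv_neg (convex_Ico ρ₀ R) ?_ ?_
    · intro ρ hρm
      have hmem : ρ ∈ Set.Ioo (0 : ℝ) R := ⟨lt_of_lt_of_le hρ₀.1 hρm.1, hρm.2⟩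
      exact (hderiv ρ hmem).continuousAt.continuousWithinAt
    · intro ρ hρm
      rw [interior_Ico] at hρm
      have hmem : ρ ∈ Set.Ioo (0 : ℝ) R := ⟨lt_trans hρ₀.1 hρm.1, hρm.2⟩
      rw [(hderiv ρ hmem).deriv]
      exact hsignneg ρ hρm
  refine ⟨fun ρ hρ => hderiv ρ hρ, ?_, ?_⟩
  · -- unique zero
    refine ⟨ρ₀, ⟨hρ₀, hGρ₀⟩, ?_⟩
    rintro ρ ⟨hρmem, heq⟩
    have heq' : Gfun m (R / ρ) = 0 := heq
    have hρpos : 0 < ρ := hρmem.1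
    have ht : 1 < R / ρ := (one_lt_div hρpos).2 hρmem.2
    have hinj := hsm.injOn
    have hEq : R / ρ = t₀ := hinj (Set.mem_Ioi.2 ht) ht₀ (by rw [heq', hGt₀])
    have hRval : R = t₀ * ρ := (div_eq_iff (ne_of_gt hρpos)).1 hEq
    rw [hρ₀def, hRval]
    exact (mul_div_cancel_left₀ ρ (by linarith : t₀ ≠ 0)).symm
  · -- strict maximum
    refine ⟨ρ₀, hρ₀, hGρ₀, ?_⟩
    intro ρ hρmem hne
    rcases lt_or_gt_of_ne hne with hlt | hgt
    · exact hmono ⟨hρmem.1, hlt.le⟩ ⟨hρ₀.1, le_refl _⟩ hlt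
    · exact hanti ⟨le_refl _, hρ₀.2⟩ ⟨hgt.le, hρmem.2⟩ hgt
end

section
/- Fix m ≥ 3, let c, c_∞, and R > 0 be as in the higher-dimensional catenoid construction, and fix R_∞ > 1 with c_∞/2 ≤ c(R_∞) ≤ c_∞. Then for H > 0 sufficiently small: (i) ρ·c(R/ρ) ≤ H whenever 0 < ρ ≤ H/c_∞, and (ii) ρ·c(R/ρ) ≥ H whenever 2H/c_∞ ≤ ρ ≤ R/R_∞. Hence the smaller solution ρ of ρ·c(R/ρ) = H satisfies H/c_∞ ≤ ρ ≤ 2H/c_∞. -/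
open MeasureTheory Set


private lemma cat_meas (m : ℕ) :
    Measurable (fun s : ℝ => (Real.sqrt (s ^ (2 * (m - 1)) - 1))⁻¹) :=
  (Real.continuous_sqrt.comp ((continuous_pow _).sub continuous_const)).measurable.inv

private lemma cat_integrableOn (m : ℕ) (hm : 2 ≤ m) (b : ℝ) :
    IntegrableOn (fun s : ℝ => (Real.sqrt (s ^ (2 * (m - 1)) - 1))⁻¹) (Ioo 1 b) := by
  rcases le_or_gt b 1 with hb | hb
  · rw [Ioo_eq_empty (fun h => absurd hb (not_le.mpr h))]
    exact integrableOn_empty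
  · have hg : IntervalIntegrable (fun x : ℝ => x ^ (-(1/2) : ℝ)) volume 0 (b - 1) :=
      intervalIntegral.intervalIntegrable_rpow' (by norm_num)
    have hg2 := hg.comp_sub_right 1
    rw [zero_add, sub_add_cancel] at hg2
    have hg3 : IntegrableOn (fun x : ℝ => (x - 1) ^ (-(1/2) : ℝ)) (Ioo 1 b) :=
      hg2.1.mono_set Ioo_subset_Ioc_self
    refine Integrable.mono' hg3 ((cat_meas m).aestronglyMeasurable.restrict) ?_
    rw [ae_restrict_iff' measurableSet_Ioo]
    refine Filter.Eventually.of_forall (fun s hs => ?_)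
    have hs1 : (1:ℝ) < s := hs.1
    have h0 : (0:ℝ) < s - 1 := by linarith
    have hle : s - 1 ≤ s ^ (2 * (m - 1)) - 1 := by
      have : s ≤ s ^ (2 * (m - 1)) := le_self_pow₀ hs1.le (by omega)
      linarith
    have h1 : Real.sqrt (s - 1) ≤ Real.sqrt (s ^ (2 * (m - 1)) - 1) := Real.sqrt_le_sqrt hle
    have h2 : (0:ℝ) < Real.sqrt (s - 1) := Real.sqrt_pos.mpr h0
    rw [Real.norm_eq_abs, abs_of_nonneg (by positivity)]
    calc (Real.sqrt (s ^ (2 * (m - 1)) - 1))⁻¹ ≤ (Real.sqrt (s - 1))⁻¹ := inv_anti₀ h2 h1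
      _ = (s - 1) ^ (-(1/2) : ℝ) := by
          rw [Real.rpow_neg h0.le, Real.sqrt_eq_rpow]

private lemma cat_nonneg (m : ℕ) (r : ℝ) : 0 ≤ cprof m r :=
  setIntegral_nonneg measurableSet_Ioo (fun s _ => by positivity)

private lemma cat_mono (m : ℕ) (hm : 2 ≤ m) : Monotone (cprof m) := by
  intro r₁ r₂ h
  exact setIntegral_mono_set (cat_integrableOn m hm r₂)
    (Filter.Eventually.of_forall (fun s => by positivity))
    (HasSubset.Subset.eventuallyLE (Ioo_subset_Ioo_right h))

private lemma cat_pos (m : ℕ) (hm : 2 ≤ m) {r : ℝ} (hr : 1 < r) : 0 < cprof m r := by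
  rw [cprof]
  rw [setIntegral_pos_iff_support_of_nonneg_ae
    (Filter.Eventually.of_forall (fun s => by positivity)) (cat_integrableOn m hm r)]
  have hsub : Ioo 1 r ⊆ Function.support (fun s : ℝ => (Real.sqrt (s ^ (2 * (m - 1)) - 1))⁻¹) := by
    intro s hs
    have hs1 : (1:ℝ) < s := hs.1
    have h1 : (1:ℝ) < s ^ (2 * (m - 1)) := one_lt_pow₀ hs1 (by omega)
    have h2 : (0:ℝ) < Real.sqrt (s ^ (2 * (m - 1)) - 1) := Real.sqrt_pos.mpr (by linarith)
    have : (0:ℝ) < (Real.sqrt (s ^ (2 * (m - 1)) - 1))⁻¹ := by positivity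
    exact ne_of_gt this
  calc (0:ENNReal) < volume (Ioo 1 r) := by
        rw [Real.volume_Ioo]; simp only [ENNReal.ofReal_pos]; linarith
    _ ≤ volume (Function.support (fun s : ℝ => (Real.sqrt (s ^ (2 * (m - 1)) - 1))⁻¹) ∩ Ioo 1 r) :=
        measure_mono (fun s hs => ⟨hsub hs, hs⟩)

private lemma cat_contOn (m : ℕ) (hm : 2 ≤ m) (b : ℝ) :
    ContinuousOn (cprof m) (Icc 1 b) := by
  have heq : ∀ r : ℝ, cprof m r
      = ∫ t in Ioc 1 r, (Real.sqrt (t ^ (2 * (m - 1)) - 1))⁻¹ := fun r =>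
    (integral_Ioc_eq_integral_Ioo).symm
  have h : ContinuousOn (fun x : ℝ => ∫ t in Ioc 1 x,
      (Real.sqrt (t ^ (2 * (m - 1)) - 1))⁻¹) (Icc 1 b) :=
    intervalIntegral.continuousOn_primitive
      ((integrableOn_Icc_iff_integrableOn_Ioo).mpr (cat_integrableOn m hm b))
  exact h.congr (fun r _ => heq r)

/-- For `m ≥ 3`, `c_∞ = lim c`, `R > 0` and `R_∞ > 1` with `c_∞/2 ≤ c(R_∞) ≤ c_∞`:
for all sufficiently small `H > 0`, (i) `ρ c(R/ρ) ≤ H` whenever `0 < ρ ≤ H/c_∞`, and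
(ii) `ρ c(R/ρ) ≥ H` whenever `2H/c_∞ ≤ ρ ≤ R/R_∞`. Hence the smaller solution `ρ` of
`ρ c(R/ρ) = H` satisfies `H/c_∞ ≤ ρ ≤ 2H/c_∞`. -/
theorem stmt8 (m : ℕ) (hm : 3 ≤ m) (R Rinf cinf : ℝ) (hR : 0 < R) (hRinf : 1 < Rinf)
    (hlim : Filter.Tendsto (fun r => cprof m r) Filter.atTop (nhds cinf))
    (hc2 : cinf / 2 ≤ cprof m Rinf) (hc3 : cprof m Rinf ≤ cinf) :
    ∃ H₀ : ℝ, 0 < H₀ ∧ ∀ H : ℝ, 0 < H → H ≤ H₀ →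
      (∀ ρ : ℝ, 0 < ρ → ρ ≤ H / cinf → ρ * cprof m (R / ρ) ≤ H) ∧
      (∀ ρ : ℝ, 2 * H / cinf ≤ ρ → ρ ≤ R / Rinf → H ≤ ρ * cprof m (R / ρ)) ∧
      (∀ ρ : ℝ, 0 < ρ → ρ * cprof m (R / ρ) = H →
        (∀ ρ' : ℝ, 0 < ρ' → ρ' * cprof m (R / ρ') = H → ρ ≤ ρ') →
        H / cinf ≤ ρ ∧ ρ ≤ 2 * H / cinf) := by
  have hm2 : 2 ≤ m := by omega
  have hcpos : 0 < cprof m Rinf := cat_pos m hm2 hRinf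
  have hcinf : 0 < cinf := lt_of_lt_of_le hcpos hc3
  have hub : ∀ r, cprof m r ≤ cinf := (cat_mono m hm2).ge_of_tendsto hlim
  refine ⟨R * cinf / (2 * Rinf), by positivity, fun H hH hH0 => ?_⟩
  -- part (i)
  have part1 : ∀ ρ : ℝ, 0 < ρ → ρ ≤ H / cinf → ρ * cprof m (R / ρ) ≤ H := by
    intro ρ hρ hρle
    calc ρ * cprof m (R / ρ) ≤ ρ * cinf :=
          mul_le_mul_of_nonneg_left (hub _) hρ.le
      _ ≤ (H / cinf) * cinf := mul_le_mul_of_nonneg_right hρle hcinf.le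
      _ = H := div_mul_cancel₀ H hcinf.ne'
  -- part (ii)
  have part2 : ∀ ρ : ℝ, 2 * H / cinf ≤ ρ → ρ ≤ R / Rinf → H ≤ ρ * cprof m (R / ρ) := by
    intro ρ hρ1 hρ2
    have hρpos : 0 < ρ := lt_of_lt_of_le (by positivity) hρ1
    have hquot : Rinf ≤ R / ρ := by
      rw [le_div_iff₀ hρpos]
      have := (le_div_iff₀ (by linarith : (0:ℝ) < Rinf)).mp hρ2
      linarith
    have h1 : cinf / 2 ≤ cprof m (R / ρ) := le_trans hc2 (cat_mono m hm2 hquot)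
    calc H = (2 * H / cinf) * (cinf / 2) := by field_simp
      _ ≤ ρ * (cinf / 2) := mul_le_mul_of_nonneg_right hρ1 (by positivity)
      _ ≤ ρ * cprof m (R / ρ) := mul_le_mul_of_nonneg_left h1 hρpos.le
  refine ⟨part1, part2, fun ρ hρ heq hmin => ?_⟩
  constructor
  · rw [div_le_iff₀ hcinf]
    calc H = ρ * cprof m (R / ρ) := heq.symm
      _ ≤ ρ * cinf := mul_le_mul_of_nonneg_left (hub _) hρ.le
  · -- produce a solution in [H/cinf, 2H/cinf] via IVT
    set ρ₁ := H / cinf with hρ₁def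
    set ρ₂ := 2 * H / cinf with hρ₂def
    have hρ₁pos : 0 < ρ₁ := by positivity
    have hρ₂pos : 0 < ρ₂ := by positivity
    have h12 : ρ₁ ≤ ρ₂ := by
      rw [hρ₁def, hρ₂def, div_le_div_iff_of_pos_right hcinf]; linarith
    have hρ₂le : ρ₂ ≤ R / Rinf := by
      rw [hρ₂def, div_le_div_iff₀ hcinf (by linarith : (0:ℝ) < Rinf)]
      have := (le_div_iff₀ (by positivity : (0:ℝ) < 2 * Rinf)).mp hH0
      linarith
    have hcont : ContinuousOn (fun ρ => ρ * cprof m (R / ρ)) (Icc ρ₁ ρ₂) := by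
      have hmaps : MapsTo (fun ρ : ℝ => R / ρ) (Icc ρ₁ ρ₂) (Icc 1 (R / ρ₁)) := by
        intro x hx
        have hx1 : ρ₁ ≤ x := hx.1
        have hx2 : x ≤ ρ₂ := hx.2
        have hxpos : 0 < x := lt_of_lt_of_le hρ₁pos hx1
        constructor
        · have h1 : Rinf ≤ R / x := by
            rw [le_div_iff₀ hxpos]
            have hx3 : x ≤ R / Rinf := le_trans hx2 hρ₂le
            have := (le_div_iff₀ (by linarith : (0:ℝ) < Rinf)).mp hx3
            linarith
          linarith
        · exact div_le_div_of_nonneg_left hR.le hρ₁pos hx1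
      have hdiv : ContinuousOn (fun ρ : ℝ => R / ρ) (Icc ρ₁ ρ₂) :=
        continuousOn_const.div continuousOn_id
          (fun x hx => ne_of_gt (lt_of_lt_of_le hρ₁pos hx.1))
      exact continuousOn_id.mul ((cat_contOn m hm2 (R / ρ₁)).comp hdiv hmaps)
    have hIVT : H ∈ Icc (ρ₁ * cprof m (R / ρ₁)) (ρ₂ * cprof m (R / ρ₂)) :=
      ⟨part1 ρ₁ hρ₁pos le_rfl, part2 ρ₂ le_rfl hρ₂le⟩
    obtain ⟨ρ', hρ'mem, hρ'eq⟩ := intermediate_value_Icc h12 hcont hIVT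
    exact le_trans (hmin ρ' (lt_of_lt_of_le hρ₁pos hρ'mem.1) hρ'eq) hρ'mem.2
end
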